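/- Bol's identity: for a nonnegative integer k and a holomorphic (or smooth, or formally differentiable) function f of a variable τ, the (k+1)-st derivative intertwines the weight −k and weight k+2 slash actions of SL₂: for γ = (a b; c d) with ad−bc=1, d^{k+1}/dτ^{k+1} [ (cτ+d)^k f(γτ) ] = (cτ+d)^{−k−2} f^{(k+1)}(γτ), where γτ = (aτ+b)/(cτ+d). -/

import Mathlib

open Finset
open scoped ContDiff

private lemma bol_coeff (k j i : ℕ) (hij : i ≤ j) :
    (((j+1).choose (i+1) : ℂ)) * (∏ t ∈ Ico (i+1) (j+1), ((k:ℂ) - t)) =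
      (j.choose (i+1) : ℂ) * (∏ t ∈ Ico (i+1) j, ((k:ℂ) - t)) * ((k:ℂ) - j - i - 1) +
      (j.choose i : ℂ) * (∏ t ∈ Ico i j, ((k:ℂ) - t)) := by
  rcases eq_or_lt_of_le hij with rfl | hlt
  · simp [Nat.choose_succ_self]
  · rw [Finset.prod_Ico_succ_top (Nat.succ_le_of_lt hlt),
        Finset.prod_eq_prod_Ico_succ_bot hlt]
    have hpas : (((j+1).choose (i+1) : ℕ) : ℂ) = (j.choose i : ℂ) + (j.choose (i+1) : ℂ) := by
      rw [Nat.choose_succ_succ]; push_cast; ring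
    have hid : (j.choose (i+1) : ℂ) * ((i:ℂ)+1) = (j.choose i : ℂ) * ((j:ℂ) - i) := by
      have h1 := Nat.choose_succ_right_eq j i
      have h2 : ((j - i : ℕ) : ℂ) = (j:ℂ) - (i:ℂ) := by
        rw [Nat.cast_sub hlt.le]
      calc (j.choose (i+1) : ℂ) * ((i:ℂ)+1) = ((j.choose (i+1) * (i+1) : ℕ) : ℂ) := by push_cast; ring
        _ = ((j.choose i * (j - i) : ℕ) : ℂ) := by rw [h1]
        _ = (j.choose i : ℂ) * ((j:ℂ) - i) := by push_cast [h2]; ring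
    linear_combination (∏ t ∈ Ico (i+1) j, ((k:ℂ) - t)) * ((k:ℂ) - j) * hpas +
      (∏ t ∈ Ico (i+1) j, ((k:ℂ) - t)) * hid


private lemma bol_sum (j : ℕ) (A B T : ℕ → ℂ)
    (h0 : T 0 = A 0) (htop : A (j + 1) = 0)
    (hstep : ∀ i, i ≤ j → T (i + 1) = A (i + 1) + B i) :
    ∑ i ∈ range (j + 1), (A i + B i) = ∑ i ∈ range (j + 2), T i := by
  rw [Finset.sum_add_distrib, Finset.sum_range_succ' _ (j + 1), Finset.sum_range_succ' _ j]
  have h1 : ∑ i ∈ range (j + 1), T (i + 1) = ∑ i ∈ range (j + 1), (A (i + 1) + B i) :=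
    Finset.sum_congr rfl fun i hi => hstep i (Nat.lt_succ_iff.mp (mem_range.mp hi))
  rw [h1, Finset.sum_add_distrib, Finset.sum_range_succ (fun x => A (x + 1)) j, htop, h0]
  ring

private lemma bol_aux (k : ℕ) (f : ℂ → ℂ) (hf : Differentiable ℂ f)
    (a b c d : ℂ) (hdet : a * d - b * c = 1) :
    ∀ (j : ℕ) (τ : ℂ), c * τ + d ≠ 0 →
    iteratedDeriv j (fun z => (c * z + d) ^ k * f ((a * z + b) / (c * z + d))) τ =
      ∑ i ∈ range (j + 1), (j.choose i : ℂ) * (∏ t ∈ Ico i j, ((k : ℂ) - t)) *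
        c ^ (j - i) * (c * τ + d) ^ ((k : ℤ) - j - i) *
        iteratedDeriv i f ((a * τ + b) / (c * τ + d)) := by
  have hcd : ContDiff ℂ ∞ f := hf.contDiff
  have hfd : ∀ i, Differentiable ℂ (iteratedDeriv i f) := by
    intro i
    rw [iteratedDeriv_eq_iterate]
    exact (hcd.iterate_deriv i).differentiable (by norm_num)
  intro j
  induction j with
  | zero =>
    intro τ hτ
    simp [zpow_natCast]
  | succ j IH =>
    intro τ hτ
    have hU : IsOpen {z : ℂ | c * z + d ≠ 0} := by
      have hcont : Continuous fun z : ℂ => c * z + d := by fun_prop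
      exact isOpen_ne.preimage hcont
    rw [iteratedDeriv_succ]
    have hEq : (iteratedDeriv j fun z => (c * z + d) ^ k * f ((a * z + b) / (c * z + d)))
        =ᶠ[nhds τ] fun z => ∑ i ∈ range (j + 1),
          (j.choose i : ℂ) * (∏ t ∈ Ico i j, ((k : ℂ) - t)) *
          c ^ (j - i) * (c * z + d) ^ ((k : ℤ) - j - i) *
          iteratedDeriv i f ((a * z + b) / (c * z + d)) :=
      Filter.eventuallyEq_of_mem (hU.mem_nhds hτ) (fun z hz => IH z hz)
    rw [hEq.deriv_eq]
    -- derivative of the affine map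
    have hlin : HasDerivAt (fun z : ℂ => c * z + d) c τ := by
      simpa using ((hasDerivAt_id τ).const_mul c).add_const d
    -- derivative of the Möbius map
    have hu : HasDerivAt (fun z : ℂ => (a * z + b) / (c * z + d)) (((c * τ + d) ^ 2)⁻¹) τ := by
      have h1 : HasDerivAt (fun z : ℂ => a * z + b) a τ := by
        simpa using ((hasDerivAt_id τ).const_mul a).add_const b
      have h2 := h1.div hlin hτ
      have h3 : (a * (c * τ + d) - (a * τ + b) * c) / (c * τ + d) ^ 2 = ((c * τ + d) ^ 2)⁻¹ := by
        have : a * (c * τ + d) - (a * τ + b) * c = 1 := by linear_combination hdet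
        rw [this, one_div]
      rwa [h3] at h2
    have hpow : ∀ m : ℤ, HasDerivAt (fun z : ℂ => (c * z + d) ^ m)
        ((m : ℂ) * (c * τ + d) ^ (m - 1) * c) τ := by
      intro m
      exact (hasDerivAt_zpow m (c * τ + d) (Or.inl hτ)).comp τ hlin
    have hcomp : ∀ i : ℕ, HasDerivAt (fun z : ℂ => iteratedDeriv i f ((a * z + b) / (c * z + d)))
        (iteratedDeriv (i + 1) f ((a * τ + b) / (c * τ + d)) * ((c * τ + d) ^ 2)⁻¹) τ := by
      intro i
      have := (((hfd i) ((a * τ + b) / (c * τ + d))).hasDerivAt).comp τ hu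
      rwa [← iteratedDeriv_succ] at this
    have hw2 : ∀ m : ℤ, (c * τ + d) ^ m * ((c * τ + d) ^ 2)⁻¹ = (c * τ + d) ^ (m - 2) := by
      intro m
      rw [zpow_sub₀ hτ, div_eq_mul_inv]
      norm_cast
    -- derivative of each summand
    have hterm : ∀ i : ℕ, HasDerivAt (fun z : ℂ =>
        (j.choose i : ℂ) * (∏ t ∈ Ico i j, ((k : ℂ) - t)) *
          c ^ (j - i) * (c * z + d) ^ ((k : ℤ) - j - i) *
          iteratedDeriv i f ((a * z + b) / (c * z + d)))
        ((j.choose i : ℂ) * (∏ t ∈ Ico i j, ((k : ℂ) - t)) * ((k : ℂ) - j - i) *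
            c ^ (j - i) * c * (c * τ + d) ^ ((k : ℤ) - j - i - 1) *
            iteratedDeriv i f ((a * τ + b) / (c * τ + d)) +
          (j.choose i : ℂ) * (∏ t ∈ Ico i j, ((k : ℂ) - t)) *
            c ^ (j - i) * (c * τ + d) ^ ((k : ℤ) - j - i - 2) *
            iteratedDeriv (i + 1) f ((a * τ + b) / (c * τ + d))) τ := by
      intro i
      have h1 := ((hpow ((k : ℤ) - j - i)).const_mul
        ((j.choose i : ℂ) * (∏ t ∈ Ico i j, ((k : ℂ) - t)) * c ^ (j - i))).mul (hcomp i)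
      refine h1.congr_deriv ?_
      rw [← hw2 ((k : ℤ) - j - i)]
      push_cast
      ring
    have hsum := HasDerivAt.fun_sum (fun i (_ : i ∈ range (j + 1)) => hterm i)
    rw [hsum.deriv]
    refine bol_sum j
      (fun i => (j.choose i : ℂ) * (∏ t ∈ Ico i j, ((k : ℂ) - t)) * ((k : ℂ) - ↑j - ↑i) *
        c ^ (j - i) * c * (c * τ + d) ^ ((k : ℤ) - ↑j - ↑i - 1) *
        iteratedDeriv i f ((a * τ + b) / (c * τ + d)))
      (fun i => (j.choose i : ℂ) * (∏ t ∈ Ico i j, ((k : ℂ) - t)) *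
        c ^ (j - i) * (c * τ + d) ^ ((k : ℤ) - ↑j - ↑i - 2) *
        iteratedDeriv (i + 1) f ((a * τ + b) / (c * τ + d)))
      (fun i => ((j + 1).choose i : ℂ) * (∏ t ∈ Ico i (j + 1), ((k : ℂ) - t)) *
        c ^ (j + 1 - i) * (c * τ + d) ^ ((k : ℤ) - ↑(j + 1) - ↑i) *
        iteratedDeriv i f ((a * τ + b) / (c * τ + d)))
      ?_ ?_ ?_
    · beta_reduce
      simp only [Nat.sub_zero, Nat.cast_zero, Nat.choose_zero_right, Nat.cast_one, sub_zero]
      rw [Finset.prod_Ico_succ_top (Nat.zero_le j)]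
      have he : (k : ℤ) - ↑(j + 1) = (k : ℤ) - ↑j - 1 := by push_cast; ring
      rw [he, pow_succ]
      ring
    · beta_reduce
      simp [Nat.choose_succ_self]
    · intro i hij
      beta_reduce
      rcases eq_or_lt_of_le hij with rfl | hlt
      · have he : (k : ℤ) - ((i:ℤ) + 1) - ((i:ℤ) + 1) = (k : ℤ) - ↑i - ↑i - 2 := by ring
        simp [Nat.choose_succ_self, he]
      · have he1 : (k : ℤ) - ↑j - ↑(i + 1) - 1 = (k : ℤ) - ↑j - ↑i - 2 := by push_cast; ring
        have he2 : (k : ℤ) - ↑(j + 1) - ↑(i + 1) = (k : ℤ) - ↑j - ↑i - 2 := by push_cast; ring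
        have hc2 : ((k : ℂ) - ↑j - ↑(i + 1)) = (k : ℂ) - ↑j - ↑i - 1 := by push_cast; ring
        rw [he1, he2, hc2, Nat.add_sub_add_right]
        have hc : c ^ (j - (i + 1)) * c = c ^ (j - i) := by
          rw [← pow_succ]; congr 1; omega
        have hco := bol_coeff k j i hij
        linear_combination (c ^ (j - i) * (c * τ + d) ^ ((k : ℤ) - ↑j - ↑i - 2) *
            iteratedDeriv (i + 1) f ((a * τ + b) / (c * τ + d))) * hco -
          ((j.choose (i + 1) : ℂ) * (∏ t ∈ Ico (i + 1) j, ((k : ℂ) - t)) *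
            ((k : ℂ) - ↑j - ↑i - 1) *
            (c * τ + d) ^ ((k : ℤ) - ↑j - ↑i - 2) *
            iteratedDeriv (i + 1) f ((a * τ + b) / (c * τ + d))) * hc

/-- **Bol's identity.** For a holomorphic function `f` and a Möbius transformation of
determinant one, the `(k+1)`-st derivative intertwines the weight `−k` and weight
`k+2` slash actions:
`d^{k+1}/dτ^{k+1} [(cτ+d)^k f(γτ)] = (cτ+d)^{−(k+2)} f^{(k+1)}(γτ)`. -/
theorem bol_identity (k : ℕ) (f : ℂ → ℂ) (hf : Differentiable ℂ f)
    (a b c d : ℂ) (hdet : a * d - b * c = 1) (τ : ℂ) (hτ : c * τ + d ≠ 0) :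
    iteratedDeriv (k + 1) (fun z => (c * z + d) ^ k * f ((a * z + b) / (c * z + d))) τ =
      ((c * τ + d) ^ (k + 2))⁻¹ * iteratedDeriv (k + 1) f ((a * τ + b) / (c * τ + d)) := by
  rw [bol_aux k f hf a b c d hdet (k + 1) τ hτ, Finset.sum_eq_single (k + 1)]
  · have he : (k : ℤ) - ↑(k + 1) - ↑(k + 1) = -(((k + 2 : ℕ) : ℤ)) := by push_cast; ring
    rw [he, zpow_neg, zpow_natCast]
    simp [Nat.choose_self]
  · intro i hi hne
    have hik : i ≤ k := by
      have := Finset.mem_range.mp hi; omega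
    have hk0 : (∏ t ∈ Ico i (k + 1), ((k : ℂ) - t)) = 0 :=
      Finset.prod_eq_zero (Finset.mem_Ico.mpr ⟨hik, Nat.lt_succ_self k⟩) (by simp)
    rw [hk0]
    ring
  · intro h
    exact absurd (Finset.mem_range.mpr (by omega)) h
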